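/- arXiv:1211.0935 — 2 statements merged into one kernel-verified Lean document; each statement's English description precedes it below -/
import Mathlib

section
/- The function φ̃₀(s) = (e^{-s²/4}/√(4π)) · ∫₀ˢ e^{w²/4} dw tends to 0 as s → +∞; in fact, s·φ̃₀(s) → 1/√π as s → +∞. -/
open Real Filter

lemma cont_e : Continuous fun w : ℝ => Real.exp (w^2/4) := by continuity

lemma hasDeriv_e (w : ℝ) : HasDerivAt (fun w : ℝ => Real.exp (w^2/4)) (Real.exp (w^2/4) * (w/2)) w := by
  have h1 : HasDerivAt (fun w : ℝ => w^2/4) (w/2) w := by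
    have := (hasDerivAt_pow 2 w).div_const 4
    exact this.congr_deriv (by push_cast; ring)
  exact h1.exp

lemma int_weight (s : ℝ) : ∫ w in (0:ℝ)..s, Real.exp (w^2/4) * (w/2) = Real.exp (s^2/4) - 1 := by
  have := intervalIntegral.integral_eq_sub_of_hasDerivAt (a := (0:ℝ)) (b := s)
    (f := fun w : ℝ => Real.exp (w^2/4))
    (fun w _ => hasDeriv_e w) ((cont_e.mul (continuous_id.div_const 2)).intervalIntegrable _ _)
  simpa using this

lemma lower_bd {s : ℝ} (hs : 0 ≤ s) :
    2 * (Real.exp (s^2/4) - 1) ≤ s * ∫ w in (0:ℝ)..s, Real.exp (w^2/4) := by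
  have hi1 : IntervalIntegrable (fun w => Real.exp (w^2/4) * (w/2)) MeasureTheory.volume 0 s :=
    (cont_e.mul (continuous_id.div_const 2)).intervalIntegrable _ _
  have hi2 : IntervalIntegrable (fun w => Real.exp (w^2/4) * (s/2)) MeasureTheory.volume 0 s :=
    (cont_e.mul continuous_const).intervalIntegrable _ _
  have h := intervalIntegral.integral_mono_on hs hi1 hi2
    (fun w hw => by
      have := (Real.exp_pos (w^2/4)).le
      have h1 : w/2 ≤ s/2 := by linarith [hw.2]
      exact mul_le_mul_of_nonneg_left h1 this)
  rw [int_weight, intervalIntegral.integral_mul_const] at h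
  linarith

lemma upper_bd {s : ℝ} (hs : 2 ≤ s) :
    (∫ w in (0:ℝ)..s, Real.exp (w^2/4)) ≤
      (s-1) * Real.exp ((s-1)^2/4) + (2/(s-1)) * Real.exp (s^2/4) := by
  have h1 : (0:ℝ) ≤ s - 1 := by linarith
  have hii : ∀ a b : ℝ, IntervalIntegrable (fun w => Real.exp (w^2/4)) MeasureTheory.volume a b :=
    fun a b => cont_e.intervalIntegrable _ _
  have hsplit : (∫ w in (0:ℝ)..(s-1), Real.exp (w^2/4)) + (∫ w in (s-1)..s, Real.exp (w^2/4))
      = ∫ w in (0:ℝ)..s, Real.exp (w^2/4) :=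
    intervalIntegral.integral_add_adjacent_intervals (hii _ _) (hii _ _)
  -- bound the first piece
  have hA : (∫ w in (0:ℝ)..(s-1), Real.exp (w^2/4)) ≤ (s-1) * Real.exp ((s-1)^2/4) := by
    have h := intervalIntegral.integral_mono_on h1 (hii 0 (s-1))
      (intervalIntegrable_const (c := Real.exp ((s-1)^2/4)))
      (fun w hw => by
        apply Real.exp_le_exp.2
        have h2 : w^2 ≤ (s-1)^2 := by nlinarith [hw.1, hw.2]
        linarith)
    rw [intervalIntegral.integral_const] at h
    simpa [smul_eq_mul] using h
  -- bound the second piece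
  have hi1 : IntervalIntegrable (fun w => Real.exp (w^2/4) * (w/2) * (2/(s-1)))
      MeasureTheory.volume (s-1) s :=
    ((cont_e.mul (continuous_id.div_const 2)).mul continuous_const).intervalIntegrable _ _
  have hB : (∫ w in (s-1)..s, Real.exp (w^2/4)) ≤ (2/(s-1)) * Real.exp (s^2/4) := by
    have h := intervalIntegral.integral_mono_on (by linarith : s - 1 ≤ s) (hii _ _) hi1
      (fun w hw => by
        have hw1 : s - 1 ≤ w := hw.1
        have hpos : (0:ℝ) < s - 1 := by linarith
        have hep := (Real.exp_pos (w^2/4)).le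
        have : 1 ≤ w/2 * (2/(s-1)) := by
          rw [div_mul_div_comm]
          rw [le_div_iff₀ (by linarith)]
          ring_nf
          linarith
        calc Real.exp (w^2/4) = Real.exp (w^2/4) * 1 := by ring
          _ ≤ Real.exp (w^2/4) * (w/2 * (2/(s-1))) := mul_le_mul_of_nonneg_left this hep
          _ = Real.exp (w^2/4) * (w/2) * (2/(s-1)) := by ring)
    have hmul : (∫ w in (s-1)..s, Real.exp (w^2/4) * (w/2) * (2/(s-1)))
        = (∫ w in (s-1)..s, Real.exp (w^2/4) * (w/2)) * (2/(s-1)) :=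
      intervalIntegral.integral_mul_const _ _
    have hval : (∫ w in (s-1)..s, Real.exp (w^2/4) * (w/2))
        = Real.exp (s^2/4) - Real.exp ((s-1)^2/4) := by
      have hadd : (∫ w in (0:ℝ)..(s-1), Real.exp (w^2/4) * (w/2))
          + (∫ w in (s-1)..s, Real.exp (w^2/4) * (w/2))
          = ∫ w in (0:ℝ)..s, Real.exp (w^2/4) * (w/2) :=
        intervalIntegral.integral_add_adjacent_intervals
          ((cont_e.mul (continuous_id.div_const 2)).intervalIntegrable _ _)
          ((cont_e.mul (continuous_id.div_const 2)).intervalIntegrable _ _)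
      rw [int_weight, int_weight] at hadd
      linarith
    rw [hmul, hval] at h
    have hpos : (0:ℝ) < 2/(s-1) := div_pos two_pos (by linarith)
    nlinarith [Real.exp_pos ((s-1)^2/4)]
  linarith

lemma hexp0 : Tendsto (fun s : ℝ => Real.exp (-s^2/4)) atTop (nhds 0) := by
  have h1 : Tendsto (fun s : ℝ => s^2/4) atTop atTop :=
    (tendsto_pow_atTop two_ne_zero).atTop_div_const (by norm_num)
  have h2 : Tendsto (fun s : ℝ => -(s^2/4)) atTop atBot := tendsto_neg_atBot_iff.2 h1
  refine (Real.tendsto_exp_atBot.comp h2).congr (fun s => ?_)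
  simp [Function.comp, neg_div]

lemma hhalf : Tendsto (fun s : ℝ => s/2) atTop atTop :=
  tendsto_id.atTop_div_const two_pos

lemma hpoly : Tendsto (fun s : ℝ => s*(s-1)*Real.exp ((1-2*s)/4)) atTop (nhds 0) := by
  have h2 : Tendsto (fun s : ℝ => (s/2)^2 * Real.exp (-(s/2))) atTop (nhds 0) :=
    (tendsto_pow_mul_exp_neg_atTop_nhds_zero 2).comp hhalf
  have h1 : Tendsto (fun s : ℝ => (s/2)^1 * Real.exp (-(s/2))) atTop (nhds 0) :=
    (tendsto_pow_mul_exp_neg_atTop_nhds_zero 1).comp hhalf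
  have hcomb : Tendsto (fun s : ℝ =>
      Real.exp (1/4) * (4*((s/2)^2 * Real.exp (-(s/2))) - 2*((s/2)^1 * Real.exp (-(s/2)))))
      atTop (nhds 0) := by
    have := ((h2.const_mul 4).sub (h1.const_mul 2)).const_mul (Real.exp (1/4))
    simpa using this
  refine hcomb.congr (fun s => ?_)
  have : (1-2*s)/4 = 1/4 + (-(s/2)) := by ring
  rw [this, Real.exp_add]
  ring

lemma hratio : Tendsto (fun s : ℝ => 2*s/(s-1)) atTop (nhds 2) := by
  have h0 : Tendsto (fun s : ℝ => s - 1) atTop atTop := tendsto_atTop_add_const_right _ _ tendsto_id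
  have h1 : Tendsto (fun s : ℝ => (s-1)⁻¹) atTop (nhds 0) := tendsto_inv_atTop_zero.comp h0
  have h2 : Tendsto (fun s : ℝ => 2*(1 + (s-1)⁻¹)) atTop (nhds 2) := by
    have := (h1.const_add 1).const_mul 2
    simpa using this
  apply h2.congr'
  filter_upwards [eventually_gt_atTop 1] with s hs
  have : s - 1 ≠ 0 := by linarith
  field_simp
  ring

/-- `φ̃₀(s) → 0` as `s → +∞`; in fact `s·φ̃₀(s) → 1/√π` as `s → +∞`. -/
theorem stmt_9 (φt₀ : ℝ → ℝ)
    (hφt₀ : ∀ s : ℝ, φt₀ s =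
      Real.exp (-s ^ 2 / 4) / Real.sqrt (4 * π) * ∫ w in (0 : ℝ)..s, Real.exp (w ^ 2 / 4)) :
    Tendsto φt₀ atTop (nhds 0) ∧
    Tendsto (fun s => s * φt₀ s) atTop (nhds (1 / Real.sqrt π)) := by
  have hπ : (0:ℝ) < π := Real.pi_pos
  have hc : (0:ℝ) < Real.sqrt (4*π) := Real.sqrt_pos.2 (by positivity)
  have hsqrt : Real.sqrt (4*π) = 2 * Real.sqrt π := by
    rw [show (4:ℝ)*π = 2^2 * π by ring, Real.sqrt_mul (by positivity), Real.sqrt_sq (by norm_num)]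
  have hval : (2 : ℝ) / Real.sqrt (4*π) = 1 / Real.sqrt π := by
    have hπ' : Real.sqrt π ≠ 0 := ne_of_gt (Real.sqrt_pos.2 hπ)
    rw [hsqrt]; field_simp
  -- the squeeze
  have hL : Tendsto (fun s : ℝ => 2*(1 - Real.exp (-s^2/4)) / Real.sqrt (4*π))
      atTop (nhds (1 / Real.sqrt π)) := by
    rw [← hval]
    have := ((hexp0.const_sub 1).const_mul 2).div_const (Real.sqrt (4*π))
    simpa using this
  have hU : Tendsto (fun s : ℝ =>
      (s*(s-1)*Real.exp ((1-2*s)/4) + 2*s/(s-1)) / Real.sqrt (4*π))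
      atTop (nhds (1 / Real.sqrt π)) := by
    rw [← hval]
    have := (hpoly.add hratio).div_const (Real.sqrt (4*π))
    simpa using this
  have h2 : Tendsto (fun s => s * φt₀ s) atTop (nhds (1 / Real.sqrt π)) := by
    apply tendsto_of_tendsto_of_tendsto_of_le_of_le' hL hU
    · filter_upwards [eventually_ge_atTop (2:ℝ)] with s hs
      rw [hφt₀]
      have key : Real.exp (-s^2/4) * Real.exp (s^2/4) = 1 := by
        rw [← Real.exp_add, show -s^2/4 + s^2/4 = 0 by ring, Real.exp_zero]
      have hlow := lower_bd (by linarith : (0:ℝ) ≤ s)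
      have hE := (Real.exp_pos (-s^2/4)).le
      have hmul := mul_le_mul_of_nonneg_left hlow hE
      have heq : s * (Real.exp (-s ^ 2 / 4) / Real.sqrt (4*π) * ∫ w in (0:ℝ)..s, Real.exp (w^2/4))
          = (Real.exp (-s^2/4) * (s * ∫ w in (0:ℝ)..s, Real.exp (w^2/4))) / Real.sqrt (4*π) := by
        rw [neg_div]; ring
      rw [heq]
      apply div_le_div_of_nonneg_right ?_ hc.le
      nlinarith
    · filter_upwards [eventually_ge_atTop (2:ℝ)] with s hs
      rw [hφt₀]
      have key : Real.exp (-s^2/4) * Real.exp (s^2/4) = 1 := by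
        rw [← Real.exp_add, show -s^2/4 + s^2/4 = 0 by ring, Real.exp_zero]
      have key2 : Real.exp (-s^2/4) * Real.exp ((s-1)^2/4) = Real.exp ((1-2*s)/4) := by
        rw [← Real.exp_add]; congr 1; ring
      have hup := upper_bd hs
      have hE := (Real.exp_pos (-s^2/4)).le
      have hs1 : (0:ℝ) < s - 1 := by linarith
      have heq : s * (Real.exp (-s ^ 2 / 4) / Real.sqrt (4*π) * ∫ w in (0:ℝ)..s, Real.exp (w^2/4))
          = (Real.exp (-s^2/4) * (s * ∫ w in (0:ℝ)..s, Real.exp (w^2/4))) / Real.sqrt (4*π) := by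
        rw [neg_div]; ring
      rw [heq]
      apply div_le_div_of_nonneg_right ?_ hc.le
      have hmul := mul_le_mul_of_nonneg_left
        (mul_le_mul_of_nonneg_left hup (by linarith : (0:ℝ) ≤ s)) hE
      have expand : Real.exp (-s^2/4) * (s * ((s-1) * Real.exp ((s-1)^2/4)
          + 2/(s-1) * Real.exp (s^2/4)))
          = s*(s-1)*(Real.exp (-s^2/4) * Real.exp ((s-1)^2/4))
            + (2*s/(s-1)) * (Real.exp (-s^2/4) * Real.exp (s^2/4)) := by
        field_simp
      rw [expand, key, key2] at hmul
      linarith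
  refine ⟨?_, h2⟩
  have hinv : Tendsto (fun s : ℝ => s⁻¹) atTop (nhds 0) := tendsto_inv_atTop_zero
  have := h2.mul hinv
  rw [mul_zero] at this
  apply this.congr'
  filter_upwards [eventually_gt_atTop (0:ℝ)] with s hs
  field_simp
end

section
/- For each non-negative integer p, the function ũ_p(x,t) = (Dt)^{-(p+1)/2} φ̃_p(x/√(Dt)), where φ̃_p is the p-th derivative of φ̃₀(s) = (e^{-s²/4}/√(4π)) ∫₀ˢ e^{w²/4} dw, satisfies both the diffusion equation ∂ũ_p/∂t = D ∂²ũ_p/∂x² and the similarity relation θ^{p+1} ũ_p(θx, θ²t) = ũ_p(x,t) for θ > 0, t > 0. -/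
open Real

noncomputable def Phi12 : ℝ → ℝ := fun s =>
  Real.exp (-s ^ 2 / 4) / Real.sqrt (4 * π) * ∫ w in (0 : ℝ)..s, Real.exp (w ^ 2 / 4)

lemma cont12 : Continuous (fun w : ℝ => Real.exp (w ^ 2 / 4)) := by fun_prop

lemma I12_hasDerivAt (s : ℝ) :
    HasDerivAt (fun u : ℝ => ∫ w in (0:ℝ)..u, Real.exp (w ^ 2 / 4)) (Real.exp (s ^ 2 / 4)) s :=
  (cont12.integral_hasStrictDerivAt 0 s).hasDerivAt

lemma I12_contDiff : ContDiff ℝ (⊤:ℕ∞) (fun u : ℝ => ∫ w in (0:ℝ)..u, Real.exp (w ^ 2 / 4)) := by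
  rw [contDiff_infty_iff_deriv]
  refine ⟨fun s => (I12_hasDerivAt s).differentiableAt, ?_⟩
  have h : deriv (fun u : ℝ => ∫ w in (0:ℝ)..u, Real.exp (w ^ 2 / 4))
      = fun s : ℝ => Real.exp (s ^ 2 / 4) := funext fun s => (I12_hasDerivAt s).deriv
  rw [h]
  exact Real.contDiff_exp.comp ((contDiff_id.pow 2).div_const 4)

lemma Phi12_contDiff : ContDiff ℝ (⊤:ℕ∞) Phi12 := by
  unfold Phi12
  exact ((Real.contDiff_exp.comp (((contDiff_id.pow 2).neg).div_const 4)).div_const _).mul I12_contDiff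

lemma Phi12_hasDerivAt (s : ℝ) :
    HasDerivAt Phi12 (-(s/2) * Phi12 s + 1 / Real.sqrt (4 * π)) s := by
  have h1 : HasDerivAt (fun s : ℝ => Real.exp (-s ^ 2 / 4) / Real.sqrt (4 * π))
      ((Real.exp (-s ^ 2 / 4) * (-(2 * s ^ 1) / 4)) / Real.sqrt (4 * π)) s :=
    (((hasDerivAt_pow 2 s).neg.div_const 4).exp).div_const _
  have h2 := h1.mul (I12_hasDerivAt s)
  have hexp : Real.exp (-s ^ 2 / 4) * Real.exp (s ^ 2 / 4) = 1 := by
    rw [← Real.exp_add, show -s ^ 2 / 4 + s ^ 2 / 4 = (0:ℝ) by ring, Real.exp_zero]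
  have h4 : Real.exp (-s ^ 2 / 4) / Real.sqrt (4 * π) * Real.exp (s ^ 2 / 4)
      = 1 / Real.sqrt (4 * π) := by
    rw [div_mul_eq_mul_div, hexp]
  refine h2.congr_deriv ?_
  unfold Phi12
  rw [h4]
  ring

lemma g12_diff (p : ℕ) : Differentiable ℝ (iteratedDeriv p Phi12) :=
  Phi12_contDiff.differentiable_iteratedDeriv p (by exact_mod_cast ENat.coe_lt_top p)

lemma g12_hasDerivAt (p : ℕ) (s : ℝ) :
    HasDerivAt (iteratedDeriv p Phi12) (iteratedDeriv (p+1) Phi12 s) s := by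
  rw [iteratedDeriv_succ]
  exact ((g12_diff p) s).hasDerivAt

lemma g12_rec (p : ℕ) (s : ℝ) : iteratedDeriv (p+2) Phi12 s
    = -(((p:ℝ)+1)/2) * iteratedDeriv p Phi12 s - s/2 * iteratedDeriv (p+1) Phi12 s := by
  induction p generalizing s with
  | zero =>
    have h1 : iteratedDeriv 1 Phi12 = fun u : ℝ => -(u/2) * Phi12 u + 1 / Real.sqrt (4 * π) := by
      funext u; rw [iteratedDeriv_one]; exact (Phi12_hasDerivAt u).deriv
    have h2 : HasDerivAt (fun u : ℝ => -(u/2) * Phi12 u + 1 / Real.sqrt (4 * π))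
        (-(1/2) * Phi12 s + -(s/2) * (-(s/2) * Phi12 s + 1 / Real.sqrt (4 * π))) s := by
      have := (((hasDerivAt_id s).div_const 2).neg.mul (Phi12_hasDerivAt s)).add_const
        (1 / Real.sqrt (4 * π))
      exact this
    have h3 : iteratedDeriv 2 Phi12 s = deriv (iteratedDeriv 1 Phi12) s := by
      rw [iteratedDeriv_succ]
    rw [h3, h1, h2.deriv]
    simp only [iteratedDeriv_zero]
    push_cast; ring
  | succ n ih =>
    have hfun : iteratedDeriv (n+2) Phi12 = fun u : ℝ =>
        -(((n:ℝ)+1)/2) * iteratedDeriv n Phi12 u - u/2 * iteratedDeriv (n+1) Phi12 u :=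
      funext fun u => ih u
    have h2 : HasDerivAt (fun u : ℝ =>
        -(((n:ℝ)+1)/2) * iteratedDeriv n Phi12 u - u/2 * iteratedDeriv (n+1) Phi12 u)
        (-(((n:ℝ)+1)/2) * iteratedDeriv (n+1) Phi12 s -
          (1/2 * iteratedDeriv (n+1) Phi12 s + s/2 * iteratedDeriv (n+2) Phi12 s)) s := by
      have := ((g12_hasDerivAt n s).const_mul (-(((n:ℝ)+1)/2))).sub
        (((hasDerivAt_id s).div_const 2).mul (g12_hasDerivAt (n+1) s))
      exact this
    have h3 : iteratedDeriv (n+3) Phi12 = deriv (iteratedDeriv (n+2) Phi12) :=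
      iteratedDeriv_succ
    have key : iteratedDeriv (n+3) Phi12 s
        = -(((n:ℝ)+1)/2) * iteratedDeriv (n+1) Phi12 s -
          (1/2 * iteratedDeriv (n+1) Phi12 s + s/2 * iteratedDeriv (n+2) Phi12 s) := by
      rw [h3]
      conv_lhs => rw [hfun]
      exact h2.deriv
    show iteratedDeriv (n+3) Phi12 s = -((((n+1:ℕ):ℝ)+1)/2) * iteratedDeriv (n+1) Phi12 s
        - s/2 * iteratedDeriv (n+2) Phi12 s
    rw [key]
    push_cast; ring

lemma pow_helper12 (θ a : ℝ) (hθ : 0 < θ) (ha : 0 < a) (p : ℕ) :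
    (θ ^ 2 * a) ^ (-((p:ℝ)+1)/2 : ℝ) = (θ ^ (p+1) : ℝ)⁻¹ * a ^ (-((p:ℝ)+1)/2 : ℝ) := by
  rw [Real.mul_rpow (by positivity) ha.le]
  congr 1
  rw [← Real.rpow_natCast θ 2, ← Real.rpow_mul hθ.le,
    show (((2:ℕ):ℝ) * (-((p:ℝ)+1)/2)) = -((p:ℝ)+1) by push_cast; ring,
    Real.rpow_neg hθ.le, show ((p:ℝ)+1) = ((p+1 : ℕ):ℝ) by push_cast; ring,
    Real.rpow_natCast]

/-- For each non-negative integer `p`, `ũ_p(x,t) = (Dt)^{-(p+1)/2} φ̃_p(x/√(Dt))`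
satisfies both the diffusion equation and the similarity relation
`θ^{p+1} ũ_p(θx, θ²t) = ũ_p(x,t)`. -/
theorem stmt_12 (D : ℝ) (hD : 0 < D) (p : ℕ)
    (φt₀ : ℝ → ℝ)
    (hφt₀ : ∀ s : ℝ, φt₀ s =
      Real.exp (-s ^ 2 / 4) / Real.sqrt (4 * π) * ∫ w in (0 : ℝ)..s, Real.exp (w ^ 2 / 4))
    (ut : ℝ → ℝ → ℝ)
    (hut : ∀ x t : ℝ, ut x t =
      (D * t) ^ (-((p : ℝ) + 1) / 2 : ℝ) * iteratedDeriv p φt₀ (x / Real.sqrt (D * t))) :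
    (∀ (x t : ℝ), 0 < t →
      deriv (fun τ => ut x τ) t = D * deriv (deriv (fun y => ut y t)) x) ∧
    (∀ (θ x t : ℝ), 0 < θ → 0 < t →
      θ ^ (p + 1) * ut (θ * x) (θ ^ 2 * t) = ut x t) := by
  have hphi : φt₀ = Phi12 := funext fun s => (hφt₀ s)
  subst hphi
  constructor
  · -- diffusion equation
    intro x t ht
    have hDt : 0 < D * t := mul_pos hD ht
    have hsq : 0 < Real.sqrt (D * t) := Real.sqrt_pos.mpr hDt
    set r : ℝ := -((p:ℝ)+1)/2 with hr
    set st : ℝ := x / Real.sqrt (D*t) with hst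
    have hinner : ∀ τ : ℝ, HasDerivAt (fun τ : ℝ => D * τ) D τ := fun τ => by
      simpa using (hasDerivAt_id τ).const_mul D
    have hA : HasDerivAt (fun τ : ℝ => (D*τ)^r) (r * (D*t)^(r-1) * D) t :=
      (Real.hasDerivAt_rpow_const (p := r) (Or.inl hDt.ne')).comp t (hinner t)
    have hsqrtT : HasDerivAt (fun τ : ℝ => Real.sqrt (D*τ)) (1/(2*Real.sqrt (D*t)) * D) t :=
      (Real.hasDerivAt_sqrt hDt.ne').comp t (hinner t)
    have hstT : HasDerivAt (fun τ : ℝ => x / Real.sqrt (D*τ))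
        ((0 * Real.sqrt (D*t) - x * (1/(2*Real.sqrt (D*t)) * D)) / Real.sqrt (D*t)^2) t :=
      (hasDerivAt_const t x).div hsqrtT hsq.ne'
    have hgT := (g12_hasDerivAt p st).comp t hstT
    have hT : HasDerivAt (fun τ => ut x τ)
        (r * (D*t)^(r-1) * D * iteratedDeriv p Phi12 st +
          (D*t)^r * (iteratedDeriv (p+1) Phi12 st *
            ((0 * Real.sqrt (D*t) - x * (1/(2*Real.sqrt (D*t)) * D)) / Real.sqrt (D*t)^2))) t := by
      simp only [hut]
      exact hA.mul hgT
    have hy : ∀ y : ℝ, HasDerivAt (fun y => ut y t)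
        ((D*t)^r * (iteratedDeriv (p+1) Phi12 (y / Real.sqrt (D*t)) * (1/Real.sqrt (D*t)))) y := by
      intro y
      have hi : HasDerivAt (fun y : ℝ => y / Real.sqrt (D*t)) (1/Real.sqrt (D*t)) y := by
        simpa using (hasDerivAt_id y).div_const (Real.sqrt (D*t))
      have h := ((g12_hasDerivAt p (y / Real.sqrt (D*t))).comp y hi).const_mul ((D*t)^r)
      simp only [hut]
      exact h
    have hd1 : deriv (fun y => ut y t) = fun y =>
        (D*t)^r * (iteratedDeriv (p+1) Phi12 (y / Real.sqrt (D*t)) * (1/Real.sqrt (D*t))) :=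
      funext fun y => (hy y).deriv
    have h2x : HasDerivAt (fun y =>
        (D*t)^r * (iteratedDeriv (p+1) Phi12 (y / Real.sqrt (D*t)) * (1/Real.sqrt (D*t))))
        ((D*t)^r * (iteratedDeriv (p+2) Phi12 st * (1/Real.sqrt (D*t)) * (1/Real.sqrt (D*t)))) x := by
      have hi : HasDerivAt (fun y : ℝ => y / Real.sqrt (D*t)) (1/Real.sqrt (D*t)) x := by
        simpa using (hasDerivAt_id x).div_const (Real.sqrt (D*t))
      exact (((g12_hasDerivAt (p+1) st).comp x hi).mul_const (1/Real.sqrt (D*t))).const_mul ((D*t)^r)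
    rw [hT.deriv, hd1, h2x.deriv, g12_rec p st]
    rw [Real.rpow_sub hDt, Real.rpow_one]
    set S := Real.sqrt (D*t) with hS
    have hS2 : S^2 = D*t := Real.sq_sqrt hDt.le
    have hSne : S ≠ 0 := hsq.ne'
    have hx : x = st * S := by rw [hst]; field_simp
    rw [hx, ← hS2, hr]
    field_simp
    ring
  · -- similarity relation
    intro θ x t hθ ht
    have hDt : 0 < D * t := mul_pos hD ht
    rw [hut, hut]
    have h1 : D * (θ^2 * t) = θ^2 * (D*t) := by ring
    have hsqrt : Real.sqrt (θ^2 * (D*t)) = θ * Real.sqrt (D*t) := by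
      rw [Real.sqrt_mul (sq_nonneg θ), Real.sqrt_sq hθ.le]
    have harg : θ * x / (θ * Real.sqrt (D*t)) = x / Real.sqrt (D*t) := by
      rw [mul_div_mul_left _ _ hθ.ne']
    rw [h1, hsqrt, harg, pow_helper12 θ (D*t) hθ hDt p]
    have hne : (θ : ℝ) ^ (p+1) ≠ 0 := by positivity
    field_simp
end
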